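/- arXiv:1311.2849 — 2 statements merged into one kernel-verified Lean document; each statement's English description precedes it below -/
import Mathlib

section
/- Let C be an n×n matrix over a commutative ring such that the sum of entries in each row is zero and the sum of entries in each column is zero. Then all (n−1)×(n−1) minors of C are equal up to sign; more precisely, the (i,j) cofactor (−1)^{i+j} det(C with row i and column j deleted) is independent of i and j. -/
open Matrix Finset

/-- A square matrix whose columns each sum to zero has zero determinant. -/
lemma det_eq_zero_of_col_sums_zero {R : Type*} [CommRing R] {m : ℕ}
    (A : Matrix (Fin (m + 1)) (Fin (m + 1)) R) (h : ∀ c, ∑ i, A i c = 0) :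
    A.det = 0 := by
  have h0 : (∑ k, (1 : R) • A k) = 0 := by
    funext c
    rw [Finset.sum_apply]
    simpa using h c
  have := Matrix.det_updateRow_sum A 0 (fun _ => (1 : R))
  rw [h0] at this
  have hz : (A.updateRow 0 (0 : Fin (m + 1) → R)).det = 0 :=
    Matrix.det_eq_zero_of_row_eq_zero 0 (by simp)
  simpa [hz] using this.symm

/-- Key lemma: border `B` with a standard basis column; for a `(m+1) × m` matrix whose
columns sum to zero, the signed minors obtained by deleting a row are all equal. -/
lemma signed_minor_independent {R : Type*} [CommRing R] {m : ℕ}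
    (B : Matrix (Fin (m + 1)) (Fin m) R) (h : ∀ c, ∑ i, B i c = 0)
    (i k : Fin (m + 1)) :
    (-1 : R) ^ (i : ℕ) * (B.submatrix i.succAbove id).det =
      (-1 : R) ^ (k : ℕ) * (B.submatrix k.succAbove id).det := by
  -- bordered matrix with first column v
  set M : (Fin (m + 1) → R) → Matrix (Fin (m + 1)) (Fin (m + 1)) R :=
    fun v => Matrix.of (fun p => Fin.cons (v p) (B p)) with hM
  have hMup : ∀ v w : Fin (m + 1) → R, M v = (M w).updateCol 0 v := by
    intro v w
    ext p q
    refine Fin.cases ?_ (fun q => ?_) q <;>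
      simp [hM, Matrix.updateCol_apply, Fin.succ_ne_zero]
  have hdet : ∀ v : Fin (m + 1) → R, (M v).det =
      ∑ p : Fin (m + 1), (-1 : R) ^ (p : ℕ) * v p * (B.submatrix p.succAbove id).det := by
    intro v
    rw [Matrix.det_succ_column_zero]
    refine Finset.sum_congr rfl fun p _ => ?_
    have h0 : M v p 0 = v p := by simp [hM]
    have hsub : (M v).submatrix p.succAbove Fin.succ = B.submatrix p.succAbove id := by
      ext a b; simp [hM]
    rw [h0, hsub]
  have hsingle : ∀ p : Fin (m + 1), (M (Pi.single p 1)).det =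
      (-1 : R) ^ (p : ℕ) * (B.submatrix p.succAbove id).det := by
    intro p
    rw [hdet]
    rw [Finset.sum_eq_single p]
    · simp
    · intro b _ hb
      simp [Pi.single_eq_of_ne hb]
    · simp
  have hzero : (M (Pi.single k 1 - Pi.single i 1)).det = 0 := by
    apply det_eq_zero_of_col_sums_zero
    intro c
    refine Fin.cases ?_ (fun c => ?_) c
    · simp [hM, Pi.single_apply, Finset.sum_sub_distrib]
    · simpa [hM] using h c
  have hadd : (M (Pi.single k 1)).det =
      (M (Pi.single i 1)).det + (M (Pi.single k 1 - Pi.single i 1)).det := by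
    rw [hMup (Pi.single k 1) 0, hMup (Pi.single i 1) 0,
      hMup (Pi.single k 1 - Pi.single i 1) 0, ← Matrix.det_updateCol_add]
    congr 1
    simp [sub_add_cancel, add_sub_cancel]
  rw [← hsingle, ← hsingle, hadd, hzero, add_zero]

/-- For a pseudostochastic (zero row sums and zero column sums) square
matrix `C`, the `(i,j)` cofactor `(-1)^(i+j) * det(C with row i and column j deleted)`
is independent of `i` and `j`. -/
theorem pseudostochastic_cofactor_independent
    {R : Type*} [CommRing R] {n : ℕ} (C : Matrix (Fin (n + 1)) (Fin (n + 1)) R)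
    (hrow : ∀ i, ∑ j, C i j = 0) (hcol : ∀ j, ∑ i, C i j = 0)
    (i j k l : Fin (n + 1)) :
    (-1 : R) ^ ((i : ℕ) + (j : ℕ)) * (C.submatrix i.succAbove j.succAbove).det =
      (-1 : R) ^ ((k : ℕ) + (l : ℕ)) * (C.submatrix k.succAbove l.succAbove).det := by
  -- Step 1: vary the row (fixed column j) using zero column sums.
  have step1 : (-1 : R) ^ (i : ℕ) * (C.submatrix i.succAbove j.succAbove).det =
      (-1 : R) ^ (k : ℕ) * (C.submatrix k.succAbove j.succAbove).det := by
    have := signed_minor_independent (C.submatrix id j.succAbove)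
      (fun c => hcol (j.succAbove c)) i k
    simpa using this
  -- Step 2: vary the column (fixed row k) using zero row sums, via transpose.
  have step2 : (-1 : R) ^ (j : ℕ) * (C.submatrix k.succAbove j.succAbove).det =
      (-1 : R) ^ (l : ℕ) * (C.submatrix k.succAbove l.succAbove).det := by
    have := signed_minor_independent ((C.submatrix k.succAbove id)ᵀ)
      (fun c => hrow (k.succAbove c)) j l
    have e1 : ((C.submatrix k.succAbove id)ᵀ.submatrix j.succAbove id).det =
        (C.submatrix k.succAbove j.succAbove).det := by
      rw [← Matrix.det_transpose]
      congr 1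
    have e2 : ((C.submatrix k.succAbove id)ᵀ.submatrix l.succAbove id).det =
        (C.submatrix k.succAbove l.succAbove).det := by
      rw [← Matrix.det_transpose]
      congr 1
    rw [e1, e2] at this
    exact this
  calc (-1 : R) ^ ((i : ℕ) + (j : ℕ)) * (C.submatrix i.succAbove j.succAbove).det
      = (-1 : R) ^ (j : ℕ) * ((-1 : R) ^ (i : ℕ) * (C.submatrix i.succAbove j.succAbove).det) := by
        rw [pow_add]; ring
    _ = (-1 : R) ^ (j : ℕ) * ((-1 : R) ^ (k : ℕ) * (C.submatrix k.succAbove j.succAbove).det) := by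
        rw [step1]
    _ = (-1 : R) ^ (k : ℕ) * ((-1 : R) ^ (j : ℕ) * (C.submatrix k.succAbove j.succAbove).det) := by
        ring
    _ = (-1 : R) ^ (k : ℕ) * ((-1 : R) ^ (l : ℕ) * (C.submatrix k.succAbove l.succAbove).det) := by
        rw [step2]
    _ = (-1 : R) ^ ((k : ℕ) + (l : ℕ)) * (C.submatrix k.succAbove l.succAbove).det := by
        rw [pow_add]; ring
end

section
/- Let C be an n×n matrix over a commutative ring with zero row sums and zero column sums, and let C' be its adjugate (the matrix of cofactors transposed). Then all entries of C' are equal. -/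
open Matrix Finset

/-- If every column of a square matrix sums to zero, its determinant is zero. -/
lemma det_eq_zero_of_col_sums {R : Type*} [CommRing R] {n : ℕ} (hn : 0 < n)
    (M : Matrix (Fin n) (Fin n) R) (h : ∀ b, ∑ a, M a b = 0) : M.det = 0 := by
  have j : Fin n := ⟨0, hn⟩
  have hsum : (∑ k, (1 : R) • M k) = 0 := by
    ext b
    rw [Finset.sum_apply]
    simpa using h b
  have h1 : (M.updateRow j (∑ k, (1 : R) • M k)).det = (1 : R) • M.det :=
    Matrix.det_updateRow_sum M j (fun _ => 1)
  rw [hsum] at h1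
  have h0 : (M.updateRow j (0 : Fin n → R)).det = 0 := by
    apply Matrix.det_eq_zero_of_row_eq_zero j
    intro b
    simp
  rw [h0] at h1
  simpa using h1.symm

/-- If every row of a square matrix sums to zero, its determinant is zero. -/
lemma det_eq_zero_of_row_sums {R : Type*} [CommRing R] {n : ℕ} (hn : 0 < n)
    (M : Matrix (Fin n) (Fin n) R) (h : ∀ a, ∑ b, M a b = 0) : M.det = 0 := by
  rw [← Matrix.det_transpose]
  exact det_eq_zero_of_col_sums hn Mᵀ (fun b => h b)

/-- With zero row sums, the adjugate does not depend on its first index. -/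
lemma adjugate_fst_eq {R : Type*} [CommRing R] {n : ℕ} (C : Matrix (Fin n) (Fin n) R)
    (hrow : ∀ i, ∑ j, C i j = 0) (i k j : Fin n) :
    C.adjugate i j = C.adjugate k j := by
  have hn : 0 < n := i.pos
  rw [Matrix.adjugate_apply, Matrix.adjugate_apply]
  have key : (C.updateRow j (Pi.single i 1 - Pi.single k 1)).det = 0 := by
    apply det_eq_zero_of_row_sums hn
    intro a
    by_cases ha : a = j
    · subst ha
      simp [Matrix.updateRow_self, Finset.sum_sub_distrib]
    · simp only [Matrix.updateRow_ne ha]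
      exact hrow a
  have expand : (C.updateRow j (Pi.single i 1)).det
      = (C.updateRow j (Pi.single i 1 - Pi.single k 1)).det
        + (C.updateRow j (Pi.single k 1)).det := by
    rw [← Matrix.det_updateRow_add]
    congr 1
    ext b
    simp
  rw [expand, key, zero_add]

/-- The adjugate of a pseudostochastic matrix (zero row sums and zero
column sums) has all entries equal. -/
theorem pseudostochastic_adjugate_entries_equal
    {R : Type*} [CommRing R] {n : ℕ} (C : Matrix (Fin n) (Fin n) R)
    (hrow : ∀ i, ∑ j, C i j = 0) (hcol : ∀ j, ∑ i, C i j = 0)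
    (i j k l : Fin n) :
    C.adjugate i j = C.adjugate k l := by
  have step1 : C.adjugate i j = C.adjugate k j := adjugate_fst_eq C hrow i k j
  have step2 : C.adjugate k j = C.adjugate k l := by
    have ht : (C.adjugate)ᵀ = Cᵀ.adjugate := Matrix.adjugate_transpose C
    have h1 : C.adjugate k j = Cᵀ.adjugate j k := by
      rw [← ht]; rfl
    have h2 : C.adjugate k l = Cᵀ.adjugate l k := by
      rw [← ht]; rfl
    rw [h1, h2]
    exact adjugate_fst_eq Cᵀ (fun a => hcol a) j l k
  rw [step1, step2]
end
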